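/- Let x_1, …, x_n and y_1, …, y_n be points in ℝ^d, assume the matrix [y_1 … y_n] has full rank d, and let j_1, …, j_d be d indices maximizing the absolute value of the determinant of [y_{j_1} … y_{j_d}] over all choices of d indices. Let i_1, …, i_d be d distinct indices, let R and R̃ be arbitrary d×d orthogonal matrices, and let π be a permutation of {1,…,n} with π(i_k) = j_k for all k = 1,…,d. Define δ = sqrt(Σ_{k=1}^d ‖x_{i_k} − R y_{π(i_k)}‖_2²) and δ̃ = sqrt(Σ_{k=1}^d ‖x_{i_k} − R̃ y_{π(i_k)}‖_2²). Then for every l ∈ {1,…,n}, ‖(R − R̃) y_l‖_2 ≤ √d · (δ̃ + δ). -/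

import Mathlib

open scoped BigOperators Matrix

/-- Euclidean norm on `ℝ^d` (vectors as functions `Fin d → ℝ`). -/
noncomputable def vnorm {d : ℕ} (v : Fin d → ℝ) : ℝ :=
  Real.sqrt (∑ a, (v a) ^ 2)

/-- The matrix with columns `y (j 0), …, y (j (d-1))`. -/
noncomputable def colMatrix {n d : ℕ} (y : Fin n → Fin d → ℝ) (j : Fin d → Fin n) :
    Matrix (Fin d) (Fin d) ℝ :=
  Matrix.of fun a b => y (j b) a

lemma vnorm_eq_norm {d : ℕ} (v : Fin d → ℝ) :
    vnorm v = ‖(WithLp.equiv 2 (Fin d → ℝ)).symm v‖ := by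
  rw [EuclideanSpace.norm_eq]
  simp [vnorm, Real.norm_eq_abs, sq_abs]

lemma vnorm_sq {d : ℕ} (v : Fin d → ℝ) : vnorm v ^ 2 = ∑ a, (v a) ^ 2 :=
  Real.sq_sqrt (Finset.sum_nonneg fun _ _ => sq_nonneg _)

lemma vnorm_nonneg {d : ℕ} (v : Fin d → ℝ) : 0 ≤ vnorm v := Real.sqrt_nonneg _

theorem stmt1 {n d : ℕ} (x y : Fin n → Fin d → ℝ)
    (hrank : (Matrix.of fun (a : Fin d) (b : Fin n) => y b a).rank = d)
    (j : Fin d → Fin n)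
    (hj : ∀ j' : Fin d → Fin n,
      |(colMatrix y j').det| ≤ |(colMatrix y j).det|)
    (i : Fin d → Fin n) (hi : Function.Injective i)
    (R Rt : Matrix (Fin d) (Fin d) ℝ)
    (hR : Rᵀ * R = 1) (hRt : Rtᵀ * Rt = 1)
    (σ : Equiv.Perm (Fin n)) (hσ : ∀ k : Fin d, σ (i k) = j k)
    (δ δt : ℝ)
    (hδ : δ = Real.sqrt (∑ k : Fin d, (vnorm (x (i k) - R.mulVec (y (σ (i k)))))^2))
    (hδt : δt = Real.sqrt (∑ k : Fin d, (vnorm (x (i k) - Rt.mulVec (y (σ (i k)))))^2)) :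
    ∀ l : Fin n, vnorm ((R - Rt).mulVec (y l)) ≤ Real.sqrt d * (δt + δ) := by
  classical
  intro l
  simp only [hσ] at hδ hδt
  set M := colMatrix y j with hM
  -- Step 1: the maximal determinant is nonzero
  have hdet : M.det ≠ 0 := by
    have hspan : Submodule.span ℝ (Set.range fun b : Fin n => (fun a => y b a)) = ⊤ := by
      have h1 := (Matrix.of fun (a : Fin d) (b : Fin n) => y b a).rank_eq_finrank_span_cols
      rw [hrank] at h1
      apply Submodule.eq_top_of_finrank_eq
      rw [Module.finrank_fin_fun]
      exact h1.symm
    obtain ⟨b, hbsub, hbspan, hbli⟩ :=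
      exists_linearIndependent ℝ (Set.range fun b : Fin n => (fun a => y b a))
    rw [hspan] at hbspan
    let B : Module.Basis b ℝ (Fin d → ℝ) := Module.Basis.mk hbli (by rw [Subtype.range_coe]; exact le_of_eq hbspan.symm)
    let e : ↥b ≃ Fin d := B.indexEquiv (Pi.basisFun ℝ (Fin d))
    have hmem : ∀ k : Fin d, ((e.symm k : (Fin d → ℝ))) ∈
        Set.range fun b : Fin n => (fun a => y b a) := fun k => hbsub (e.symm k).2
    choose j' hj' using hmem
    have hA : IsUnit (colMatrix y j') := by
      rw [← Matrix.linearIndependent_cols_iff_isUnit]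
      have hli := (B.reindex e).linearIndependent
      have heq : (fun k : Fin d => (colMatrix y j')ᵀ k) = fun k => (B.reindex e) k := by
        funext k
        rw [Module.Basis.reindex_apply]
        have : B (e.symm k) = ((e.symm k : (Fin d → ℝ))) := Module.Basis.mk_apply _ _ _
        rw [this, ← hj' k]
        rfl
      change LinearIndependent ℝ (fun k : Fin d => (colMatrix y j')ᵀ k)
      rw [heq]
      exact hli
    have hdet' : (colMatrix y j').det ≠ 0 := by
      intro h
      have := hA.map Matrix.detMonoidHom
      simp only [Matrix.coe_detMonoidHom] at this
      rw [h] at this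
      exact not_isUnit_zero this
    intro h
    have := hj j'
    rw [h, abs_zero] at this
    exact hdet' (abs_eq_zero.mp (le_antisymm this (abs_nonneg _)))
  -- Step 2: Cramer coefficients
  set c : Fin d → ℝ := fun k => Matrix.cramer M (y l) k / M.det with hc
  have hck : ∀ k, |c k| ≤ 1 := by
    intro k
    rw [hc, abs_div, div_le_one (abs_pos.2 hdet), Matrix.cramer_apply]
    have hupd : M.updateCol k (y l) = colMatrix y (Function.update j k l) := by
      ext a b
      by_cases hbk : b = k <;>
        simp [hM, colMatrix, Matrix.updateCol_apply, Function.update, hbk]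
    rw [hupd]
    exact hj _
  have hyl : y l = ∑ k, c k • (fun a => y (j k) a) := by
    funext a
    have h2 := congrFun (Matrix.mulVec_cramer M (y l)) a
    simp only [Matrix.mulVec, dotProduct, Pi.smul_apply, smul_eq_mul] at h2
    rw [Finset.sum_apply]
    have : ∀ k ∈ Finset.univ, (c k • fun a => y (j k) a) a
        = (M a k * Matrix.cramer M (y l) k) / M.det := by
      intro k _
      simp only [Pi.smul_apply, smul_eq_mul, hc]
      have : M a k = y (j k) a := rfl
      rw [this]
      ring
    rw [Finset.sum_congr rfl this, ← Finset.sum_div, h2, mul_div_cancel_left₀ _ hdet]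
  -- Step 3: expand (R - Rt) *ᵥ y l
  have hsplit : (R - Rt).mulVec (y l) = ∑ k, c k • ((R - Rt).mulVec (y (j k))) := by
    have : (R - Rt).mulVec (y l) = (R - Rt).mulVecLin (∑ k, c k • (fun a => y (j k) a)) := by
      rw [← hyl]; rfl
    rw [this, map_sum]
    refine Finset.sum_congr rfl fun k _ => ?_
    rw [map_smul]
    rfl
  -- Step 4: triangle inequality
  have key1 : vnorm ((R - Rt).mulVec (y l)) ≤ ∑ k, vnorm ((R - Rt).mulVec (y (j k))) := by
    rw [hsplit, vnorm_eq_norm]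
    have hφ : (WithLp.equiv 2 (Fin d → ℝ)).symm (∑ k, c k • ((R - Rt).mulVec (y (j k))))
        = ∑ k, c k • (WithLp.equiv 2 (Fin d → ℝ)).symm ((R - Rt).mulVec (y (j k))) := by
      simp only [WithLp.equiv_symm_apply, WithLp.toLp_sum, WithLp.toLp_smul]
    rw [hφ]
    calc ‖∑ k, c k • (WithLp.equiv 2 (Fin d → ℝ)).symm ((R - Rt).mulVec (y (j k)))‖
        ≤ ∑ k, ‖c k • (WithLp.equiv 2 (Fin d → ℝ)).symm ((R - Rt).mulVec (y (j k)))‖ :=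
          norm_sum_le _ _
      _ ≤ ∑ k, vnorm ((R - Rt).mulVec (y (j k))) := by
          refine Finset.sum_le_sum fun k _ => ?_
          rw [norm_smul, Real.norm_eq_abs, ← vnorm_eq_norm]
          calc |c k| * vnorm ((R - Rt).mulVec (y (j k)))
              ≤ 1 * vnorm ((R - Rt).mulVec (y (j k))) :=
                mul_le_mul_of_nonneg_right (hck k) (vnorm_nonneg _)
            _ = _ := one_mul _
  -- Step 5: Cauchy-Schwarz
  have key2 : ∑ k, vnorm ((R - Rt).mulVec (y (j k)))
      ≤ Real.sqrt d * Real.sqrt (∑ k, (vnorm ((R - Rt).mulVec (y (j k))))^2) := by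
    have h := sq_sum_le_card_mul_sum_sq (s := (Finset.univ : Finset (Fin d)))
      (f := fun k => vnorm ((R - Rt).mulVec (y (j k))))
    have hcard : ((Finset.univ : Finset (Fin d)).card : ℝ) = d := by simp
    rw [hcard] at h
    have hnn : 0 ≤ ∑ k, vnorm ((R - Rt).mulVec (y (j k))) :=
      Finset.sum_nonneg fun _ _ => vnorm_nonneg _
    calc ∑ k, vnorm ((R - Rt).mulVec (y (j k)))
        = Real.sqrt ((∑ k, vnorm ((R - Rt).mulVec (y (j k))))^2) := (Real.sqrt_sq hnn).symm
      _ ≤ Real.sqrt ((d : ℝ) * ∑ k, (vnorm ((R - Rt).mulVec (y (j k))))^2) :=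
          Real.sqrt_le_sqrt h
      _ = Real.sqrt d * Real.sqrt (∑ k, (vnorm ((R - Rt).mulVec (y (j k))))^2) :=
          Real.sqrt_mul (Nat.cast_nonneg d) _
  -- Step 6: the L2 bound by δt + δ
  have key3 : Real.sqrt (∑ k, (vnorm ((R - Rt).mulVec (y (j k))))^2) ≤ δt + δ := by
    set U : EuclideanSpace ℝ (Fin d × Fin d) :=
      (WithLp.equiv 2 (Fin d × Fin d → ℝ)).symm
        (fun p => (x (i p.1) - R.mulVec (y (j p.1))) p.2) with hU
    set Ut : EuclideanSpace ℝ (Fin d × Fin d) :=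
      (WithLp.equiv 2 (Fin d × Fin d → ℝ)).symm
        (fun p => (x (i p.1) - Rt.mulVec (y (j p.1))) p.2) with hUt
    have hUnorm : ‖U‖ = δ := by
      rw [hδ, EuclideanSpace.norm_eq]
      congr 1
      rw [Fintype.sum_prod_type]
      refine Finset.sum_congr rfl fun k _ => ?_
      rw [vnorm_sq]
      refine Finset.sum_congr rfl fun a _ => ?_
      simp [hU, Real.norm_eq_abs, sq_abs]
    have hUtnorm : ‖Ut‖ = δt := by
      rw [hδt, EuclideanSpace.norm_eq]
      congr 1
      rw [Fintype.sum_prod_type]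
      refine Finset.sum_congr rfl fun k _ => ?_
      rw [vnorm_sq]
      refine Finset.sum_congr rfl fun a _ => ?_
      simp [hUt, Real.norm_eq_abs, sq_abs]
    have hdiff : Real.sqrt (∑ k, (vnorm ((R - Rt).mulVec (y (j k))))^2) = ‖Ut - U‖ := by
      rw [EuclideanSpace.norm_eq, Fintype.sum_prod_type]
      congr 1
      refine Finset.sum_congr rfl fun k _ => ?_
      rw [vnorm_sq]
      refine Finset.sum_congr rfl fun a _ => ?_
      have : (Ut - U) (k, a) = ((R - Rt).mulVec (y (j k))) a := by
        simp only [hU, hUt, PiLp.sub_apply, WithLp.equiv_symm_apply, PiLp.toLp_apply,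
          Matrix.sub_mulVec, Pi.sub_apply]
        ring
      rw [this, Real.norm_eq_abs, sq_abs]
    rw [hdiff, ← hUnorm, ← hUtnorm]
    exact norm_sub_le _ _
  calc vnorm ((R - Rt).mulVec (y l))
      ≤ ∑ k, vnorm ((R - Rt).mulVec (y (j k))) := key1
    _ ≤ Real.sqrt d * Real.sqrt (∑ k, (vnorm ((R - Rt).mulVec (y (j k))))^2) := key2
    _ ≤ Real.sqrt d * (δt + δ) :=
        mul_le_mul_of_nonneg_left key3 (Real.sqrt_nonneg _)
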